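/- arXiv:1109.4246 — 2 statements merged into one kernel-verified Lean document; each statement's English description precedes it below -/
import Mathlib

section
/- Occupation-time rigidity for the degenerate chain (property (⋆)). Let M be the stochastic matrix on {1,2,3} given by M = [[0,1,0],[p,0,1−p],[1−p,0,p]] with p ∈ (0,1). Then for every n ≥ 1 and every sequence (η(1),…,η(n)) ∈ {1,2,3}^n with η(1) = 3 and ∏_{i=1}^{n−1} M(η(i), η(i+1)) > 0 (i.e. a path of positive probability for the chain started at state 3), the difference of occupation times #{1 ≤ i ≤ n : η(i) = 1} − #{1 ≤ i ≤ n : η(i) = 2} equals 1 if η(n) = 1, and equals 0 if η(n) ∈ {2,3}. -/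
noncomputable section

namespace RFMeta

/-- The degenerate (but ergodic, doubly stochastic) transition matrix on `{1,2,3}`
(encoded as `Fin 3 = {0,1,2}`) with a deterministic transition from state `1` to
state `2`. -/
def degM (p : ℝ) : Matrix (Fin 3) (Fin 3) ℝ :=
  !![0, 1, 0; p, 0, 1 - p; 1 - p, 0, p]

lemma aux (p : ℝ) (hp : p ∈ Set.Ioo (0 : ℝ) 1) (η : ℕ → Fin 3) (hstart : η 0 = 2) :
    ∀ n, 1 ≤ n → (∀ i, i + 1 < n → 0 < degM p (η i) (η (i + 1))) →
    ((η (n - 1) = 0 →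
        (((Finset.range n).filter fun i => η i = 0).card : ℤ)
          - (((Finset.range n).filter fun i => η i = 1).card : ℤ) = 1) ∧
     (η (n - 1) ≠ 0 →
        (((Finset.range n).filter fun i => η i = 0).card : ℤ)
          - (((Finset.range n).filter fun i => η i = 1).card : ℤ) = 0)) := by
  intro n hn
  induction n, hn using Nat.le_induction with
  | base =>
    intro _
    constructor
    · intro h; rw [hstart] at h; exact absurd h (by decide)
    · intro _
      simp [Finset.range_one, Finset.filter_singleton, hstart]
  | succ n hn ih =>
    intro hpath
    have hpathn : ∀ i, i + 1 < n → 0 < degM p (η i) (η (i + 1)) :=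
      fun i hi => hpath i (by omega)
    obtain ⟨IH0, IHne⟩ := ih hpathn
    have htr : 0 < degM p (η (n - 1)) (η n) := by
      have := hpath (n - 1) (by omega)
      rwa [show n - 1 + 1 = n by omega] at this
    have hsucc : n + 1 - 1 = n := by omega
    rw [hsucc]
    have hc0 : (((Finset.range (n+1)).filter fun i => η i = 0).card : ℤ)
        = (((Finset.range n).filter fun i => η i = 0).card : ℤ)
          + (if η n = 0 then 1 else 0) := by
      rw [Finset.range_add_one, Finset.filter_insert]
      split_ifs with h
      · rw [Finset.card_insert_of_notMem (by simp)]; push_cast; ring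
      · simp
    have hc1 : (((Finset.range (n+1)).filter fun i => η i = 1).card : ℤ)
        = (((Finset.range n).filter fun i => η i = 1).card : ℤ)
          + (if η n = 1 then 1 else 0) := by
      rw [Finset.range_add_one, Finset.filter_insert]
      split_ifs with h
      · rw [Finset.card_insert_of_notMem (by simp)]; push_cast; ring
      · simp
    rw [hc0, hc1]
    -- case on η (n-1) and η n
    have hp0 : 0 < p := hp.1
    have hp1 : 0 < 1 - p := by have := hp.2; linarith
    have hall : ∀ x : Fin 3, x = 0 ∨ x = 1 ∨ x = 2 := by decide
    have hsimp : ∀ a b : Fin 3, degM p a b =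
        !![0, 1, 0; p, 0, 1 - p; 1 - p, 0, p] a b := fun _ _ => rfl
    rcases hall (η (n - 1)) with h1 | h1 | h1 <;> rcases hall (η n) with h2 | h2 | h2 <;>
      rw [h1, h2, hsimp] at htr <;>
      simp only [Matrix.cons_val', Matrix.cons_val_zero, Matrix.cons_val_one,
        Matrix.head_cons, Matrix.head_fin_const, Matrix.empty_val',
        Matrix.cons_val_fin_one, Matrix.of_apply, Matrix.cons_val_two,
        Matrix.tail_cons] at htr
    -- remaining possible cases: (0,1),(1,0),(1,2),(2,0),(2,2); impossible ones have htr : 0 < 0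
    · exact absurd htr (lt_irrefl 0)
    · -- (0,1)
      have d := IH0 h1
      constructor
      · intro h; rw [h2] at h; exact absurd h (by decide)
      · intro _; rw [if_neg (by rw [h2]; decide), if_pos h2]; omega
    · exact absurd htr (lt_irrefl 0)
    · -- (1,0)
      have d := IHne (by rw [h1]; decide)
      constructor
      · intro _; rw [if_pos h2, if_neg (by rw [h2]; decide)]; omega
      · intro h; exact absurd h2 h
    · exact absurd htr (lt_irrefl 0)
    · -- (1,2)
      have d := IHne (by rw [h1]; decide)
      constructor
      · intro h; rw [h2] at h; exact absurd h (by decide)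
      · intro _; rw [if_neg (by rw [h2]; decide), if_neg (by rw [h2]; decide)]; omega
    · -- (2,0)
      have d := IHne (by rw [h1]; decide)
      constructor
      · intro _; rw [if_pos h2, if_neg (by rw [h2]; decide)]; omega
      · intro h; exact absurd h2 h
    · exact absurd htr (lt_irrefl 0)
    · -- (2,2)
      have d := IHne (by rw [h1]; decide)
      constructor
      · intro h; rw [h2] at h; exact absurd h (by decide)
      · intro _; rw [if_neg (by rw [h2]; decide), if_neg (by rw [h2]; decide)]; omega
  
/-- **Occupation-time rigidity for the degenerate chain (property (⋆)).**
For every path `(η(1),…,η(n))` of positive probability for the chain with transition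
matrix `M = [[0,1,0],[p,0,1−p],[1−p,0,p]]` started at state `3`, the difference of the
occupation times of states `1` and `2` equals `1` if `η(n) = 1` and equals `0` if
`η(n) ∈ {2,3}`.  (States `1,2,3` are encoded as `0,1,2 : Fin 3`.) -/
theorem occupation_rigidity_degenerate_chain
    (p : ℝ) (hp : p ∈ Set.Ioo (0 : ℝ) 1)
    (n : ℕ) (hn : 1 ≤ n) (η : Fin n → Fin 3)
    (hstart : η ⟨0, by omega⟩ = 2)
    (hpath : ∀ i : ℕ, ∀ h : i + 1 < n,
      0 < degM p (η ⟨i, by omega⟩) (η ⟨i + 1, h⟩)) :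
    (η ⟨n - 1, by omega⟩ = 0 →
      ((Finset.univ.filter fun i => η i = 0).card : ℤ)
        - ((Finset.univ.filter fun i => η i = 1).card : ℤ) = 1) ∧
    (η ⟨n - 1, by omega⟩ = 1 ∨ η ⟨n - 1, by omega⟩ = 2 →
      ((Finset.univ.filter fun i => η i = 0).card : ℤ)
        - ((Finset.univ.filter fun i => η i = 1).card : ℤ) = 0) := by
  set η' : ℕ → Fin 3 := fun i => if h : i < n then η ⟨i, h⟩ else 2 with hη'
  have hval : ∀ i (h : i < n), η' i = η ⟨i, h⟩ := fun i h => dif_pos h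
  have hstart' : η' 0 = 2 := by rw [hval 0 (by omega)]; exact hstart
  have hpath' : ∀ i, i + 1 < n → 0 < degM p (η' i) (η' (i + 1)) := by
    intro i hi
    rw [hval i (by omega), hval (i+1) hi]
    exact hpath i hi
  obtain ⟨A0, Ane⟩ := aux p hp η' hstart' n hn hpath'
  have hlast : η' (n - 1) = η ⟨n - 1, by omega⟩ := hval (n-1) (by omega)
  have hcard : ∀ s : Fin 3,
      ((Finset.univ.filter fun i : Fin n => η i = s).card : ℤ)
        = (((Finset.range n).filter fun i => η' i = s).card : ℤ) := by
    intro s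
    congr 1
    rw [Finset.card_filter, Finset.card_filter,
      ← Fin.sum_univ_eq_sum_range (fun i => if η' i = s then 1 else 0) n]
    apply Finset.sum_congr rfl
    intro i _
    have : η' (i : ℕ) = η i := by rw [hval (i : ℕ) i.isLt]
    rw [this]
  rw [hcard 0, hcard 1, ← hlast]
  refine ⟨A0, fun h => Ane ?_⟩
  intro hc
  rcases h with h | h <;> exact absurd (h.symm.trans hc) (by decide)
end RFMeta
end
end

section
/- Stability vector of the ordered Potts state. Consider the q-state random-field Potts model with uniform field distribution π(b) = 1/q. Let u ≥ 0, let ν = ν_{1,u} ∈ P(E) be defined by ν(1) = (1 + u(q−1))/q and ν(a) = (1−u)/q for a ≠ 1, and let ν̂ ∈ P(E)^{E'} have components ν̂(b)(a) = e^{βν(a)} α[b](a) / Σ_{ā} e^{βν(ā)} α[b](ā). Define v ∈ ℝ^{E'} by v(b) = Σ_{a} (∂F/∂ν(a))(ν) · ν̂(b)(a) + S(ν̂(b)|α[b]) (the gradient of π̃ ↦ φ[π̃](ν̂) at π), and let B := −(v − (1/q)(Σ_{b'} v(b'))·𝟙) be its projection onto the tangent space T P(E'). Then B(1) = ((q−1)/q)·L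 and B(b) = −(1/q)·L for all b ≠ 1, where L = log( (e^{βu + B} + q − 1)/(e^{βu} + e^{B} + q − 2) ). In particular B = 0 when u = 0, so the disordered state has vanishing stability vector. -/
open MeasureTheory Filter Finset Real Asymptotics Topology

noncomputable section

namespace RFMeta

variable {E E' : Type*}

set_option linter.unusedSectionVars false
set_option linter.unusedVariables false
/-! ### The free energy functional and the non-degeneracy conditions -/

/-- Relative entropy `S(p|q) = ∑_a p(a) log (p(a)/q(a))`. -/
def relEnt [Fintype E] (p q : E → ℝ) : ℝ := ∑ a, p a * Real.log (p a / q a)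

/-- The free energy functional
`φ[π̂](ν̂) = F(∑_b π̂(b) ν̂(b)) + ∑_b π̂(b) S(ν̂(b)|α[b])`. -/
def phiFE [Fintype E] [Fintype E'] (F : (E → ℝ) → ℝ) (α : E' → E → ℝ)
    (ph : E' → ℝ) (νh : E' → E → ℝ) : ℝ :=
  F (fun a => ∑ b, ph b * νh b a) + ∑ b, ph b * relEnt (νh b) (α b)

/-- Non-degeneracy condition (1), first part: the set of minimizers of `ν̂ ↦ φ[π](ν̂)`
over profiles of probability vectors is exactly the finite family `ν̂_1, …, ν̂_k`. -/
def MinimizersAre [Fintype E] [Fintype E'] (F : (E → ℝ) → ℝ) (α : E' → E → ℝ)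
    (pv : E' → ℝ) {k : ℕ} (νhat : Fin k → E' → E → ℝ) : Prop :=
  Function.Injective νhat ∧
    {νh : E' → E → ℝ | (∀ b, νh b ∈ stdSimplex ℝ E) ∧
        ∀ νh' : E' → E → ℝ, (∀ b, νh' b ∈ stdSimplex ℝ E) →
          phiFE F α pv νh ≤ phiFE F α pv νh'} = Set.range νhat

/-- Non-degeneracy condition (1), second part: the Hessian of the free energy is
positive definite at each minimizer (in the directions tangent to the simplex). -/
def PosDefHessian [Fintype E] [Fintype E'] (F : (E → ℝ) → ℝ) (α : E' → E → ℝ)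
    (pv : E' → ℝ) {k : ℕ} (νhat : Fin k → E' → E → ℝ) : Prop :=
  ∀ (j : Fin k) (v : E' → E → ℝ), (∀ b, ∑ a, v b a = 0) → v ≠ 0 →
    0 < iteratedDeriv 2 (fun t : ℝ => phiFE F α pv (fun b a => νhat j b a + t * v b a)) 0

/-- The vectors `B_j` are the stability vectors: `−B_j` is the differential of the
linearization `π̃ ↦ φ[π̃](ν̂_j)` at `π`, i.e.
`φ[π̃](ν̂_j) − φ[π](ν̂_j) = −⟨B_j, π̃−π⟩ + o(‖π̃−π‖)`. -/
def AreStabilityVectors [Fintype E] [Fintype E'] (F : (E → ℝ) → ℝ) (α : E' → E → ℝ)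
    (pv : E' → ℝ) {k : ℕ} (νhat : Fin k → E' → E → ℝ) (B : Fin k → E' → ℝ) : Prop :=
  ∀ j : Fin k,
    (fun pt : E' → ℝ => phiFE F α pt (νhat j) - phiFE F α pv (νhat j)
        + ∑ b, B j b * (pt b - pv b)) =o[𝓝 pv] fun pt : E' → ℝ => ‖pt - pv‖

/-- The inner product `⟨x, y⟩ = ∑_b x(b) y(b)` on `ℝ^{E'}`. -/
def ip [Fintype E'] (x y : E' → ℝ) : ℝ := ∑ b, x b * y b

/-- The stability region `R_j = {x ∈ T P(E') : ⟨x,B_j⟩ > max_{k≠j} ⟨x,B_k⟩}`. -/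
def stabRegion [Fintype E'] {k : ℕ} (B : Fin k → E' → ℝ) (j : Fin k) : Set (E' → ℝ) :=
  {x | (∑ b, x b = 0) ∧ ∀ i, i ≠ j → ip x (B i) < ip x (B j)}
/-! ### The random-field Potts model -/

/-- The Potts energy `F(ν) = −(β/2) ∑_a ν(a)²`. -/
def pottsF (q : ℕ) (β : ℝ) : (Fin q → ℝ) → ℝ := fun ν => -(β / 2) * ∑ a, ν a ^ 2

/-- The Potts a-priori measures `α[b](a) = e^{B·1_{a=b}} / (e^B + q − 1)`. -/
def pottsAl (q : ℕ) (Bf : ℝ) : Fin q → Fin q → ℝ := fun b a =>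
  Real.exp (if a = b then Bf else 0) / (Real.exp Bf + ((q : ℝ) - 1))

lemma pottsAl_pos {q : ℕ} (hq : 1 ≤ q) {Bf : ℝ} (hB : 0 < Bf) (b a : Fin q) :
    0 < pottsAl q Bf b a := by
  apply div_pos (Real.exp_pos _)
  have h1 : (1 : ℝ) ≤ (q : ℝ) := by exact_mod_cast hq
  have := Real.exp_pos Bf
  linarith

/-- The Potts single-site kernel `γ[b](a|ν) = e^{βν(a)} α[b](a) / ∑_ā e^{βν(ā)} α[b](ā)`
(for the Potts energy one has `−dF_ν(a) = βν(a)`). -/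
def gamP (q : ℕ) (β Bf : ℝ) (b : Fin q) (ν : Fin q → ℝ) (a : Fin q) : ℝ :=
  Real.exp (β * ν a) * pottsAl q Bf b a / ∑ a' : Fin q, Real.exp (β * ν a') * pottsAl q Bf b a'

lemma gamP_mem {q : ℕ} (hq : 1 ≤ q) {β Bf : ℝ} (hB : 0 < Bf) (b : Fin q) (ν : Fin q → ℝ) :
    (fun a => gamP q β Bf b ν a) ∈ stdSimplex ℝ (Fin q) := by
  have : Nonempty (Fin q) := Fin.pos_iff_nonempty.mp hq
  have hD : 0 < ∑ a' : Fin q, Real.exp (β * ν a') * pottsAl q Bf b a' :=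
    Finset.sum_pos (fun a' _ => mul_pos (Real.exp_pos _) (pottsAl_pos hq hB b a'))
      Finset.univ_nonempty
  constructor
  · intro a
    exact div_nonneg (mul_pos (Real.exp_pos _) (pottsAl_pos hq hB b a)).le hD.le
  · simp only [gamP, ← Finset.sum_div]
    exact div_self hD.ne'

/-- The `m`-coordinate marginal of the pure product state
`μ^j[η] = ⊗_i γ[η(i)](·|ν)`, as a point of `P(E^m)`. -/
def prodKerP {q : ℕ} (hq : 1 ≤ q) {β Bf : ℝ} (hB : 0 < Bf) {m : ℕ} (ηm : Fin m → Fin q)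
    (ν : Fin q → ℝ) : stdSimplex ℝ (Fin m → Fin q) :=
  ⟨fun σ => ∏ i, gamP q β Bf (ηm i) ν (σ i), by
    constructor
    · intro σ
      exact Finset.prod_nonneg fun i _ => (gamP_mem hq hB (ηm i) ν).1 (σ i)
    · rw [← Fintype.piFinset_univ, ← Finset.prod_univ_sum]
      rw [Finset.prod_congr rfl fun i _ => (gamP_mem hq hB (ηm i) ν).2]
      exact Finset.prod_const_one⟩

/-- Convex combination `c·x + (1−c)·y` of two points of a simplex. -/
def mixPt {T : Type*} [Fintype T] (c : ℝ) (hc : c ∈ Set.Icc (0:ℝ) 1)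
    (x y : stdSimplex ℝ T) : stdSimplex ℝ T :=
  ⟨fun t => c * (x : T → ℝ) t + (1 - c) * (y : T → ℝ) t, by
    have h1 := (convex_stdSimplex ℝ T) x.2 y.2 (a := c) (b := 1 - c) hc.1
      (by linarith [hc.2]) (by ring)
    have h2 : (fun t => c * (x : T → ℝ) t + (1 - c) * (y : T → ℝ) t)
        = c • (x : T → ℝ) + (1 - c) • (y : T → ℝ) := by
      funext t
      simp [smul_eq_mul]
    rw [h2]
    exact h1⟩

/-- The symmetry-broken Potts profile `ν_{j,u}` with `ν_{j,u}(j) = (1+u(q−1))/q`,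
`ν_{j,u}(i) = (1−u)/q` for `i ≠ j`. -/
def nuU (q : ℕ) (u : ℝ) (j : Fin q) : Fin q → ℝ := fun a =>
  if a = j then (1 + u * ((q : ℝ) - 1)) / q else (1 - u) / q

lemma fderiv_pottsF (q : ℕ) (β : ℝ) (ν : Fin q → ℝ) (a : Fin q) :
    fderiv ℝ (pottsF q β) ν (Pi.single a 1) = -β * ν a := by
  have h : HasFDerivAt (pottsF q β)
      ((-(β/2)) • ∑ a' : Fin q, (2 * ν a') •
        (ContinuousLinearMap.proj a' : (Fin q → ℝ) →L[ℝ] ℝ)) ν := by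
    have hs : HasFDerivAt (fun x : Fin q → ℝ => ∑ a' : Fin q, x a' ^ 2)
        (∑ a' : Fin q, (2 * ν a') •
          (ContinuousLinearMap.proj a' : (Fin q → ℝ) →L[ℝ] ℝ)) ν := by
      refine HasFDerivAt.fun_sum fun a' _ => ?_
      have := ((ContinuousLinearMap.proj a' : (Fin q → ℝ) →L[ℝ] ℝ).hasFDerivAt
        (x := ν)).fun_mul ((ContinuousLinearMap.proj a' : (Fin q → ℝ) →L[ℝ] ℝ).hasFDerivAt (x := ν))
      simpa [pow_two, two_mul, add_smul] using this
    exact hs.const_mul (-(β/2))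
  rw [h.fderiv]
  simp [ContinuousLinearMap.sum_apply, Pi.single_apply, mul_ite, Finset.sum_ite_eq']
  ring


/-! ### Statement 14: the stability vector of the ordered Potts state -/

/-- **Stability vector of the ordered Potts state.**  In the `q`-state random-field
Potts model with uniform field distribution `π(b) = 1/q`, the (projected, negated)
gradient `B` of `π̃ ↦ φ[π̃](ν̂)` at `π`, evaluated at the profile
`ν̂(b) = γ[b](·|ν_{1,u})`, is `B(1) = ((q−1)/q)·L` and `B(b) = −L/q` for `b ≠ 1`,
where `L = log((e^{βu+B}+q−1)/(e^{βu}+e^B+q−2))`.  In particular `B = 0` for `u = 0`: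
the disordered state has vanishing stability vector.
(State `1` is encoded as `0 : Fin q`.) -/
theorem stability_vector_ordered_potts_state
    (q : ℕ) (hq : 2 ≤ q) (β Bf u : ℝ) (hβ : 0 < β) (hB : 0 < Bf) (hu : 0 ≤ u) :
    -- the ordered profile `ν = ν_{1,u}`
    let ν : Fin q → ℝ := nuU q u ⟨0, by omega⟩
    -- the minimizing profile `ν̂(b) = γ[b](·|ν)`
    let νh : Fin q → Fin q → ℝ := fun b a => gamP q β Bf b ν a
    -- the gradient `v` of `π̃ ↦ φ[π̃](ν̂)` at `π`:
    -- `v(b) = ∑_a (∂F/∂ν(a))(ν) ν̂(b)(a) + S(ν̂(b)|α[b])`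
    let v : Fin q → ℝ := fun b =>
      (∑ a, fderiv ℝ (pottsF q β) ν (Pi.single a 1) * νh b a)
        + relEnt (νh b) (pottsAl q Bf b)
    -- the stability vector: minus the projection of `v` onto `T P(E')`
    let Bv : Fin q → ℝ := fun b => -(v b - (1 / (q : ℝ)) * ∑ b', v b')
    let L : ℝ := Real.log ((Real.exp (β * u + Bf) + ((q : ℝ) - 1))
      / (Real.exp (β * u) + Real.exp Bf + ((q : ℝ) - 2)))
    Bv ⟨0, by omega⟩ = (((q : ℝ) - 1) / q) * L ∧
    (∀ b : Fin q, b ≠ ⟨0, by omega⟩ → Bv b = -(1 / (q : ℝ)) * L) ∧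
    (u = 0 → ∀ b, Bv b = 0) := by
  intro ν νh v Bv L
  have hq' : 1 ≤ q := by omega
  have hz' : 0 < q := by omega
  set z : Fin q := ⟨0, hz'⟩ with hzdef
  have hqR : (2:ℝ) ≤ (q:ℝ) := by exact_mod_cast hq
  have hq0 : (q:ℝ) ≠ 0 := by positivity
  have _inst : Nonempty (Fin q) := ⟨z⟩
  set c : ℝ := Real.exp (β * ((1 - u)/q)) with hc_def
  set A : ℝ := Real.exp (β * u + Bf) + ((q:ℝ) - 1) with hA_def
  set D : ℝ := Real.exp (β * u) + Real.exp Bf + ((q:ℝ) - 2) with hD_def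
  set den : ℝ := Real.exp Bf + ((q:ℝ) - 1) with hden_def
  have hc : 0 < c := Real.exp_pos _
  have hA : 0 < A := by have := Real.exp_pos (β * u + Bf); rw [hA_def]; linarith
  have hD : 0 < D := by
    have := Real.exp_pos (β * u); have := Real.exp_pos Bf; rw [hD_def]; linarith
  have hden : 0 < den := by have := Real.exp_pos Bf; rw [hden_def]; linarith
  set Z : Fin q → ℝ := fun b => ∑ a', Real.exp (β * ν a') * pottsAl q Bf b a' with hZdef
  have hZpos : ∀ b, 0 < Z b := fun b =>
    Finset.sum_pos (fun a' _ => mul_pos (Real.exp_pos _) (pottsAl_pos hq' hB b a'))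
      Finset.univ_nonempty
  have hν : ∀ a : Fin q, ν a = if a = z then (1 + u * ((q:ℝ)-1))/q else (1-u)/q :=
    fun a => rfl
  have hνh : ∀ b a, νh b a = Real.exp (β * ν a) * pottsAl q Bf b a / Z b := fun b a => rfl
  have hνh1 : ∀ b, ∑ a, νh b a = 1 := fun b => (gamP_mem hq' hB b ν).2
  have hL : L = Real.log (A / D) := rfl
  have hBvdef : ∀ b, Bv b = -(v b - (1/(q:ℝ)) * ∑ b', v b') := fun _ => rfl
  -- a helper for sums of if-then-else over Fin q
  have hsum_ite : ∀ (X Y : ℝ) (w : Fin q),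
      ∑ a : Fin q, (if a = w then X else Y) = X + ((q:ℝ)-1) * Y := by
    intro X Y w
    have h1 : ∀ a : Fin q, (if a = w then X else Y) = Y + (if a = w then X - Y else 0) := by
      intro a; split <;> ring
    simp only [h1, Finset.sum_add_distrib, Finset.sum_const, Finset.card_univ,
      Fintype.card_fin, nsmul_eq_mul, Finset.sum_ite_eq', Finset.mem_univ, if_true]
    ring
  -- the relative entropy term
  have hrel : ∀ b, relEnt (νh b) (pottsAl q Bf b)
      = (∑ a, β * (νh b a * ν a)) - Real.log (Z b) := by
    intro b
    have hZb := hZpos b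
    have hterm : ∀ a : Fin q, νh b a * Real.log (νh b a / pottsAl q Bf b a)
        = β * (νh b a * ν a) - νh b a * Real.log (Z b) := by
      intro a
      have hα := pottsAl_pos hq' hB b a
      have h1 : νh b a / pottsAl q Bf b a = Real.exp (β * ν a) / Z b := by
        rw [hνh b a]; field_simp
      rw [h1, Real.log_div (Real.exp_ne_zero _) hZb.ne', Real.log_exp]
      ring
    rw [relEnt, Finset.sum_congr rfl fun a _ => hterm a, Finset.sum_sub_distrib,
      ← Finset.sum_mul, hνh1 b, one_mul]
  -- the gradient `v b = -log Z b`
  have hv : ∀ b, v b = -Real.log (Z b) := by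
    intro b
    have h2 : ∀ a : Fin q, fderiv ℝ (pottsF q β) ν (Pi.single a 1) * νh b a
        = -(β * (νh b a * ν a)) := by
      intro a; rw [fderiv_pottsF]; ring
    show (∑ a, fderiv ℝ (pottsF q β) ν (Pi.single a 1) * νh b a)
        + relEnt (νh b) (pottsAl q Bf b) = -Real.log (Z b)
    rw [Finset.sum_congr rfl fun a _ => h2 a, hrel b, Finset.sum_neg_distrib]
    ring
  -- exponentials of the profile
  have hexp : ∀ a : Fin q, Real.exp (β * ν a)
      = if a = z then c * Real.exp (β * u) else c := by
    intro a
    rw [hν a]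
    by_cases h : a = z
    · rw [if_pos h, if_pos h, hc_def, ← Real.exp_add]
      congr 1
      field_simp
      ring
    · rw [if_neg h, if_neg h, hc_def]
  have hexpz : Real.exp (β * ν z) = c * Real.exp (β * u) := by
    rw [hexp z, if_pos rfl]
  -- the partition functions
  have hZeq : ∀ b, Z b = ((c * Real.exp (β * u) + ((q:ℝ)-1) * c)
      + (Real.exp Bf - 1) * Real.exp (β * ν b)) / den := by
    intro b
    have hstep : Z b = ∑ a, Real.exp (β * ν a) * Real.exp (if a = b then Bf else 0) / den := by
      simp only [hZdef, pottsAl, hden_def, mul_div_assoc]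
    rw [hstep, ← Finset.sum_div]
    congr 1
    have hterm : ∀ a : Fin q, Real.exp (β * ν a) * Real.exp (if a = b then Bf else 0)
        = Real.exp (β * ν a) + (if a = b then (Real.exp Bf - 1) * Real.exp (β * ν a) else 0) := by
      intro a
      by_cases h : a = b
      · rw [if_pos h, if_pos h]; ring
      · rw [if_neg h, if_neg h, Real.exp_zero]; ring
    rw [Finset.sum_congr rfl fun a _ => hterm a, Finset.sum_add_distrib,
      Finset.sum_ite_eq' Finset.univ b, if_pos (Finset.mem_univ b),
      Finset.sum_congr rfl fun a _ => hexp a, hsum_ite]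
  have hZz : Z z = c * A / den := by
    rw [hZeq z, hexpz]
    congr 1
    rw [hA_def, Real.exp_add]
    ring
  have hZb : ∀ b, b ≠ z → Z b = c * D / den := by
    intro b hb
    rw [hZeq b, hexp b, if_neg hb]
    congr 1
    rw [hD_def]
    ring
  -- the values of v
  have hvz : v z = -(Real.log c + Real.log A - Real.log den) := by
    rw [hv z, hZz, Real.log_div (mul_pos hc hA).ne' hden.ne', Real.log_mul hc.ne' hA.ne']
  have hvb : ∀ b, b ≠ z → v b = -(Real.log c + Real.log D - Real.log den) := by
    intro b hb
    rw [hv b, hZb b hb, Real.log_div (mul_pos hc hD).ne' hden.ne', Real.log_mul hc.ne' hD.ne']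
  have hsumv : ∑ b', v b' = -(Real.log c + Real.log A - Real.log den)
      + ((q:ℝ)-1) * (-(Real.log c + Real.log D - Real.log den)) := by
    have hcongr : ∀ b' ∈ Finset.univ, v b' = (if b' = z then
        -(Real.log c + Real.log A - Real.log den)
        else -(Real.log c + Real.log D - Real.log den)) := by
      intro b' _
      by_cases h : b' = z
      · rw [if_pos h, h, hvz]
      · rw [if_neg h, hvb b' h]
    rw [Finset.sum_congr rfl hcongr, hsum_ite]
  have hL' : L = Real.log A - Real.log D := by
    rw [hL, Real.log_div hA.ne' hD.ne']
  have hBvz : Bv z = (((q:ℝ) - 1) / q) * L := by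
    rw [hBvdef z, hvz, hsumv, hL']
    field_simp
    ring
  have hBvb : ∀ b, b ≠ z → Bv b = -(1/(q:ℝ)) * L := by
    intro b hb
    rw [hBvdef b, hvb b hb, hsumv, hL']
    field_simp
    ring
  refine ⟨hBvz, fun b hb => hBvb b hb, ?_⟩
  intro hu0 b
  have hL0 : L = 0 := by
    have hAD : A = D := by
      rw [hA_def, hD_def, hu0]
      rw [show β * (0:ℝ) + Bf = Bf by ring, show β * (0:ℝ) = 0 by ring, Real.exp_zero]
      ring
    rw [hL', hAD, sub_self]
  by_cases hbz : b = z
  · rw [hbz, hBvz, hL0, mul_zero]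
  · rw [hBvb b hbz, hL0, mul_zero]


end RFMeta
end
end
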